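/- arXiv:2505.04372 — 2 statements merged into one kernel-verified Lean document; each statement's English description precedes it below -/
import Mathlib

section
/- Let E : [0,∞) → ℝ be nonnegative and suppose that for every nonnegative C¹ test function ψ with compact support in [0,∞) we have -∫₀^∞ ψ'(t) E(t) dt + λ ∫₀^∞ ψ(t) E(t) dt ≤ ψ(0) E(0), where λ > 0 and E is continuous. Then E(τ) ≤ exp(-λτ) E(0) for all τ ≥ 0. -/
open MeasureTheory Filter Set Topology

private lemma eNIG_mono : Monotone expNegInvGlue := by
  intro x y hxy
  rcases le_or_gt x 0 with hx | hx
  · rw [expNegInvGlue.zero_of_nonpos hx]; exact expNegInvGlue.nonneg y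
  · have hy : 0 < y := hx.trans_le hxy
    have hx' : expNegInvGlue x = Real.exp (-x⁻¹) := by simp [expNegInvGlue, hx.not_ge]
    have hy' : expNegInvGlue y = Real.exp (-y⁻¹) := by simp [expNegInvGlue, hy.not_ge]
    rw [hx', hy']
    exact Real.exp_le_exp.2 (neg_le_neg (inv_anti₀ hx hxy))

private lemma st_mono : Monotone Real.smoothTransition := by
  intro x y hxy
  unfold Real.smoothTransition
  rw [div_le_div_iff₀ (Real.smoothTransition.pos_denom x) (Real.smoothTransition.pos_denom y)]
  have h1 : expNegInvGlue x ≤ expNegInvGlue y := eNIG_mono hxy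
  have h2 : expNegInvGlue (1 - y) ≤ expNegInvGlue (1 - x) := eNIG_mono (by linarith)
  nlinarith [mul_le_mul h1 h2 (expNegInvGlue.nonneg (1 - y)) (expNegInvGlue.nonneg y),
    expNegInvGlue.nonneg x, expNegInvGlue.nonneg (1 - x)]

private lemma st_diff : Differentiable ℝ Real.smoothTransition :=
  (Real.smoothTransition.contDiff (n := 1)).differentiable (by norm_num)

private lemma st_deriv_nonneg (s : ℝ) : 0 ≤ deriv Real.smoothTransition s := by
  have hd : HasDerivAt Real.smoothTransition (deriv Real.smoothTransition s) s :=
    (st_diff s).hasDerivAt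
  refine ge_of_tendsto (hasDerivAt_iff_tendsto_slope.1 hd) ?_
  refine eventually_nhdsWithin_of_forall (fun y hy => ?_)
  rw [slope_def_field]
  rcases lt_or_gt_of_ne (Ne.symm hy) with hlt | hgt
  · exact div_nonneg (by simpa using sub_nonneg.2 (st_mono hlt.le)) (by linarith)
  · exact div_nonneg_of_nonpos (by simpa using sub_nonpos.2 (st_mono hgt.le)) (by linarith)

private lemma st_deriv_zero_of_neg {s : ℝ} (hs : s < 0) :
    deriv Real.smoothTransition s = 0 := by
  have h : Real.smoothTransition =ᶠ[𝓝 s] fun _ => (0 : ℝ) := by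
    filter_upwards [Iio_mem_nhds hs] with y hy
    exact Real.smoothTransition.zero_of_nonpos hy.le
  rw [h.deriv_eq, deriv_const]

private lemma st_deriv_zero_of_one_lt {s : ℝ} (hs : 1 < s) :
    deriv Real.smoothTransition s = 0 := by
  have h : Real.smoothTransition =ᶠ[𝓝 s] fun _ => (1 : ℝ) := by
    filter_upwards [Ioi_mem_nhds hs] with y hy
    exact Real.smoothTransition.one_of_one_le hy.le
  rw [h.deriv_eq, deriv_const]

theorem energy_exponential_decay (E : ℝ → ℝ) (lam : ℝ) (hlam : 0 < lam)
    (hEc : Continuous E) (hEnn : ∀ t, 0 ≤ t → 0 ≤ E t)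
    (h : ∀ ψ : ℝ → ℝ, ContDiff ℝ 1 ψ → HasCompactSupport ψ → (∀ t, 0 ≤ ψ t) →
      (-∫ t in Set.Ici (0:ℝ), deriv ψ t * E t) + lam * ∫ t in Set.Ici (0:ℝ), ψ t * E t
        ≤ ψ 0 * E 0) :
    ∀ τ, 0 ≤ τ → E τ ≤ Real.exp (-lam * τ) * E 0 := by
  intro τ hτ
  set F : ℝ → ℝ := fun t => Real.exp (lam * t) * E t with hFdef
  have hFc : Continuous F := (Real.continuous_exp.comp (continuous_const.mul continuous_id)).mul hEc
  have key : F τ ≤ E 0 := by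
    have main : ∀ ε : ℝ, 0 < ε → F τ ≤ E 0 + ε := by
      intro ε hε
      -- choose δ by continuity of F at τ
      obtain ⟨δ, hδpos, hδ⟩ : ∃ δ > 0, ∀ t ∈ Icc τ (τ + δ), F τ - ε ≤ F t := by
        obtain ⟨δ, hδpos, hδ⟩ := Metric.continuousAt_iff.1 hFc.continuousAt ε hε
        refine ⟨δ/2, by linarith, fun t ht => ?_⟩
        have hdist : dist t τ < δ := by
          rw [Real.dist_eq, abs_of_nonneg (by linarith [ht.1])]
          linarith [ht.2]
        have h2 := hδ hdist
        rw [Real.dist_eq] at h2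
        have := abs_lt.1 h2
        linarith [this.1]
      set u : ℝ → ℝ := fun t => (τ + δ - t) / δ with hu
      set g : ℝ → ℝ := fun t => Real.smoothTransition (u t) with hg
      set ψ : ℝ → ℝ := fun t => Real.exp (lam * t) * (Real.smoothTransition (t + 2) * g t)
        with hψdef
      set Q : ℝ → ℝ := fun t => deriv Real.smoothTransition (u t) * (1 / δ) with hQ
      -- basic properties of ψ
      have huC : ContDiff ℝ 1 u := (contDiff_const.sub contDiff_id).div_const δ
      have hgC : ContDiff ℝ 1 g := (Real.smoothTransition.contDiff (n := 1)).comp huC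
      have hψC : ContDiff ℝ 1 ψ :=
        (Real.contDiff_exp.comp (contDiff_const.mul contDiff_id)).mul
          (((Real.smoothTransition.contDiff (n := 1)).comp (contDiff_id.add contDiff_const)).mul
            hgC)
      have hgzero : ∀ x, τ + δ ≤ x → g x = 0 := by
        intro x hx
        refine Real.smoothTransition.zero_of_nonpos ?_
        exact div_nonpos_iff.2 (Or.inr ⟨by linarith, hδpos.le⟩)
      have hψsupp : ∀ x, x ∉ Icc (-2 : ℝ) (τ + δ) → ψ x = 0 := by
        intro x hx
        rw [mem_Icc, not_and_or] at hx
        rcases hx with hx | hx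
        · push_neg at hx
          simp [hψdef, Real.smoothTransition.zero_of_nonpos (by linarith : x + 2 ≤ 0)]
        · push_neg at hx
          simp [hψdef, hgzero x hx.le]
      have hψcs : HasCompactSupport ψ := HasCompactSupport.intro isCompact_Icc hψsupp
      have hψnn : ∀ t, 0 ≤ ψ t := fun t =>
        mul_nonneg (Real.exp_pos _).le
          (mul_nonneg (Real.smoothTransition.nonneg _) (Real.smoothTransition.nonneg _))
      have hg0 : g 0 = 1 := by
        refine Real.smoothTransition.one_of_one_le ?_
        rw [hu]
        simp only [sub_zero]
        rw [le_div_iff₀ hδpos]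
        linarith
      have hψ0 : ψ 0 = 1 := by
        have h1 : Real.smoothTransition (2:ℝ) = 1 :=
          Real.smoothTransition.one_of_one_le (by norm_num)
        simp [hψdef, h1, hg0]
      -- ψ equals exp * g on Ici 0, with a computable derivative
      have hψeq : ∀ t : ℝ, 0 ≤ t → ψ t = Real.exp (lam * t) * g t := by
        intro t ht
        have : Real.smoothTransition (t + 2) = 1 :=
          Real.smoothTransition.one_of_one_le (by linarith)
        simp [hψdef, this]
      have hgD : ∀ t : ℝ, HasDerivAt g (deriv Real.smoothTransition (u t) * (-1 / δ)) t := by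
        intro t
        have h1 : HasDerivAt u (-1 / δ) t := by
          have h2 : HasDerivAt (fun t : ℝ => τ + δ - t) (-1) t := by
            simpa using (hasDerivAt_id t).const_sub (τ + δ)
          simpa [neg_div] using h2.div_const δ
        exact ((st_diff (u t)).hasDerivAt).comp t h1
      have hhD : ∀ t : ℝ, HasDerivAt (fun t => Real.exp (lam * t) * g t)
          (Real.exp (lam * t) * lam * g t +
            Real.exp (lam * t) * (deriv Real.smoothTransition (u t) * (-1 / δ))) t := by
        intro t
        have he : HasDerivAt (fun t : ℝ => Real.exp (lam * t)) (Real.exp (lam * t) * lam) t := by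
          have h0 : HasDerivAt (fun t : ℝ => lam * t) lam t := by
            simpa using (hasDerivAt_id t).const_mul lam
          exact (Real.hasDerivAt_exp (lam * t)).comp t h0
        exact he.mul (hgD t)
      have hψderiv : ∀ t : ℝ, 0 ≤ t → deriv ψ t =
          Real.exp (lam * t) * lam * g t +
            Real.exp (lam * t) * (deriv Real.smoothTransition (u t) * (-1 / δ)) := by
        intro t ht
        have heq : ψ =ᶠ[𝓝 t] fun t => Real.exp (lam * t) * g t := by
          filter_upwards [Ioi_mem_nhds (show (-1:ℝ) < t by linarith)] with y hy
          have : Real.smoothTransition (y + 2) = 1 :=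
            Real.smoothTransition.one_of_one_le (by linarith [hy.out])
          simp [hψdef, this]
        rw [heq.deriv_eq, (hhD t).deriv]
      -- integrability facts
      have hψEint : IntegrableOn (fun t => ψ t * E t) (Ici (0:ℝ)) :=
        ((hψC.continuous.mul hEc).integrable_of_hasCompactSupport
          (hψcs.mul_right)).integrableOn
      have hdψEint : IntegrableOn (fun t => deriv ψ t * E t) (Ici (0:ℝ)) :=
        (((hψC.continuous_deriv le_rfl).mul hEc).integrable_of_hasCompactSupport
          (hψcs.deriv.mul_right)).integrableOn
      have hQc : Continuous Q :=
        (((Real.smoothTransition.contDiff (n := 2)).continuous_deriv (by norm_num)).comp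
          huC.continuous).mul continuous_const
      have hQsupp : ∀ x, x ∉ Icc τ (τ + δ) → Q x = 0 := by
        intro x hx
        rw [mem_Icc, not_and_or] at hx
        rcases hx with hx | hx
        · push_neg at hx
          have h1 : 1 < u x := by rw [hu]; rw [lt_div_iff₀ hδpos]; linarith
          simp [hQ, st_deriv_zero_of_one_lt h1]
        · push_neg at hx
          have h1 : u x < 0 := div_neg_of_neg_of_pos (by linarith) hδpos
          simp [hQ, st_deriv_zero_of_neg h1]
      have hQcs : HasCompactSupport Q := HasCompactSupport.intro isCompact_Icc hQsupp
      have hQint : IntegrableOn Q (Ici (0:ℝ)) :=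
        (hQc.integrable_of_hasCompactSupport hQcs).integrableOn
      have hQexpEint : IntegrableOn (fun t => Real.exp (lam * t) * Q t * E t) (Ici (0:ℝ)) := by
        refine (Continuous.integrable_of_hasCompactSupport ?_ ?_).integrableOn
        · exact ((Real.continuous_exp.comp (continuous_const.mul continuous_id)).mul hQc).mul hEc
        · exact (hQcs.mul_left).mul_right
      -- the main identity
      have hid : (-∫ t in Set.Ici (0:ℝ), deriv ψ t * E t)
          + lam * ∫ t in Set.Ici (0:ℝ), ψ t * E t
          = ∫ t in Set.Ici (0:ℝ), Real.exp (lam * t) * Q t * E t := by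
        have e1 : (-∫ t in Set.Ici (0:ℝ), deriv ψ t * E t)
            + lam * ∫ t in Set.Ici (0:ℝ), ψ t * E t
            = (∫ t in Set.Ici (0:ℝ), lam * (ψ t * E t))
              - ∫ t in Set.Ici (0:ℝ), deriv ψ t * E t := by
          rw [integral_const_mul]; ring
        rw [e1, ← integral_sub (hψEint.const_mul lam) hdψEint]
        refine setIntegral_congr_fun measurableSet_Ici (fun t ht => ?_)
        rw [hψderiv t ht, hψeq t ht, hQ]
        ring
      -- the integral of Q is 1
      have hQ1 : (∫ t in Set.Ici (0:ℝ), Q t) = 1 := by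
        have hDint : IntegrableOn (fun t => deriv Real.smoothTransition (u t) * (-1 / δ))
            (Ioi (0:ℝ)) := by
          have heq : (fun t => deriv Real.smoothTransition (u t) * (-1 / δ)) = fun t => -Q t := by
            funext t; rw [hQ]; ring
          rw [heq]
          exact ((hQc.integrable_of_hasCompactSupport hQcs).neg).integrableOn
        have htend : Tendsto g atTop (𝓝 0) := by
          refine Tendsto.congr' ?_ tendsto_const_nhds
          filter_upwards [Ici_mem_atTop (τ + δ)] with x hx
          exact (hgzero x hx).symm
        have hI := integral_Ioi_of_hasDerivAt_of_tendsto' (a := 0)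
          (fun x _ => hgD x) hDint htend
        rw [hg0] at hI
        have e2 : (∫ t in Set.Ici (0:ℝ), Q t) = ∫ t in Set.Ioi (0:ℝ), Q t :=
          integral_Ici_eq_integral_Ioi
        have e3 : (∫ t in Set.Ioi (0:ℝ), Q t)
            = -∫ t in Set.Ioi (0:ℝ), deriv Real.smoothTransition (u t) * (-1 / δ) := by
          rw [← integral_neg]
          congr 1; funext t; rw [hQ]; ring
        rw [e2, e3, hI]; ring
      -- lower bound for the right-hand side
      have hlow : F τ - ε ≤ ∫ t in Set.Ici (0:ℝ), Real.exp (lam * t) * Q t * E t := by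
        have hpt : ∀ t ∈ Ici (0:ℝ), (F τ - ε) * Q t ≤ Real.exp (lam * t) * Q t * E t := by
          intro t ht
          by_cases hQt : deriv Real.smoothTransition (u t) = 0
          · simp [hQ, hQt]
          · have h0 : 0 ≤ u t := by
              by_contra hc; push_neg at hc
              exact hQt (st_deriv_zero_of_neg hc)
            have h1 : u t ≤ 1 := by
              by_contra hc; push_neg at hc
              exact hQt (st_deriv_zero_of_one_lt hc)
            have htmem : t ∈ Icc τ (τ + δ) := by
              constructor
              · rw [hu] at h1; rw [div_le_one hδpos] at h1; linarith
              · rw [hu] at h0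
                have := (le_div_iff₀ hδpos).1 h0
                linarith
            have hFt : F τ - ε ≤ F t := hδ t htmem
            have hQnn : 0 ≤ Q t := mul_nonneg (st_deriv_nonneg _) (by positivity)
            calc (F τ - ε) * Q t ≤ F t * Q t := mul_le_mul_of_nonneg_right hFt hQnn
              _ = Real.exp (lam * t) * Q t * E t := by rw [hFdef]; ring
        calc F τ - ε = (F τ - ε) * ∫ t in Set.Ici (0:ℝ), Q t := by rw [hQ1, mul_one]
          _ = ∫ t in Set.Ici (0:ℝ), (F τ - ε) * Q t := (integral_const_mul _ _).symm
          _ ≤ ∫ t in Set.Ici (0:ℝ), Real.exp (lam * t) * Q t * E t :=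
            setIntegral_mono_on (hQint.const_mul _) hQexpEint measurableSet_Ici hpt
      have hup := h ψ hψC hψcs hψnn
      rw [hψ0, one_mul, hid] at hup
      linarith
    by_contra hcon
    push_neg at hcon
    have := main ((F τ - E 0) / 2) (by linarith)
    linarith
  have hmul := mul_le_mul_of_nonneg_left key (Real.exp_pos (-lam * τ)).le
  calc E τ = Real.exp (-lam * τ) * F τ := by
        rw [hFdef]
        simp [← mul_assoc, ← Real.exp_add]
    _ ≤ Real.exp (-lam * τ) * E 0 := hmul
end

section
/- Let S ⊂ ℝ³ be a bounded measurable set of positive measure. Then there exists c > 0 such that for every Y ∈ ℝ³, every skew-symmetric Q ∈ ℝ^{3×3}, and h ∈ ℝ³ being the centroid of S: ∫_S |Y + Q(x − h)|² dx ≥ c·(|Y|² + |Q|²_F), where |Q|_F is the Frobenius norm — provided S is not contained in any line through h. -/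
open MeasureTheory Filter Set Topology
open scoped RealInnerProductSpace

/-- The product space of translational and angular velocities. -/
abbrev RigidParamSpace : Type :=
  EuclideanSpace ℝ (Fin 3) × (EuclideanSpace ℝ (Fin 3) →L[ℝ] EuclideanSpace ℝ (Fin 3))

set_option maxHeartbeats 1600000 in
theorem rigid_velocity_coercivity
    (S : Set (EuclideanSpace ℝ (Fin 3))) (hSm : MeasurableSet S)
    (hSb : Bornology.IsBounded S) (hpos : 0 < volume S)
    (h : EuclideanSpace ℝ (Fin 3))
    (hcent : h = (volume S).toReal⁻¹ • ∫ x in S, x)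
    (hline : ¬ ∃ v : EuclideanSpace ℝ (Fin 3), ∀ x ∈ S, ∃ t : ℝ, x - h = t • v) :
    ∃ c > 0, ∀ (Y : EuclideanSpace ℝ (Fin 3))
      (Q : EuclideanSpace ℝ (Fin 3) →L[ℝ] EuclideanSpace ℝ (Fin 3)),
      (∀ v w : EuclideanSpace ℝ (Fin 3), ⟪Q v, w⟫ = -⟪v, Q w⟫) →
      c * (‖Y‖ ^ 2 + ‖Q‖ ^ 2) ≤ ∫ x in S, ‖Y + Q (x - h)‖ ^ 2 := by
  -- a bound on ‖x - h‖ for x ∈ S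
  obtain ⟨C, hC⟩ := hSb.exists_norm_le
  set R : ℝ := C + ‖h‖ with hR
  have hRx : ∀ x ∈ S, ‖x - h‖ ≤ R := fun x hx => by
    calc ‖x - h‖ ≤ ‖x‖ + ‖h‖ := norm_sub_le _ _
    _ ≤ C + ‖h‖ := by gcongr; exact hC x hx
  have hR0 : (0:ℝ) ≤ 1 + R := by
    obtain ⟨x, hx⟩ := nonempty_of_measure_ne_zero hpos.ne'
    have := hRx x hx
    have h0 := norm_nonneg (x - h)
    linarith
  have hvol : volume S < ⊤ := hSb.measure_lt_top
  set F : RigidParamSpace → ℝ :=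
    fun p => ∫ x in S, ‖p.1 + p.2 (x - h)‖ ^ 2 with hF
  -- basic pointwise bound
  have hbd : ∀ (p : RigidParamSpace) (x : EuclideanSpace ℝ (Fin 3)), x ∈ S →
      ‖p.1 + p.2 (x - h)‖ ≤ (1 + R) * ‖p‖ := by
    intro p x hx
    calc ‖p.1 + p.2 (x - h)‖ ≤ ‖p.1‖ + ‖p.2 (x - h)‖ := norm_add_le _ _
    _ ≤ ‖p‖ + ‖p.2‖ * ‖x - h‖ := add_le_add (norm_fst_le p) (p.2.le_opNorm _)
    _ ≤ ‖p‖ + ‖p‖ * R :=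
        add_le_add_right (mul_le_mul (norm_snd_le p) (hRx x hx) (norm_nonneg _)
          (norm_nonneg _)) _
    _ = (1 + R) * ‖p‖ := by ring
  have hmeas : ∀ p : RigidParamSpace,
      AEStronglyMeasurable (fun x => ‖p.1 + p.2 (x - h)‖ ^ 2) (volume.restrict S) := by
    intro p
    exact ((continuous_const.add (p.2.continuous.comp (continuous_id.sub
      continuous_const))).norm.pow 2).aestronglyMeasurable
  have hint : ∀ p : RigidParamSpace, IntegrableOn (fun x => ‖p.1 + p.2 (x - h)‖ ^ 2) S := by
    intro p
    refine Integrable.mono' (g := fun _ => ((1 + R) * ‖p‖) ^ 2)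
      (integrableOn_const hvol.ne) (hmeas p) ?_
    filter_upwards [ae_restrict_mem hSm] with x hx
    rw [Real.norm_eq_abs, abs_of_nonneg (by positivity)]
    have := hbd p x hx
    have h0 : (0:ℝ) ≤ ‖p.1 + p.2 (x - h)‖ := norm_nonneg _
    nlinarith
  have hFnonneg : ∀ p : RigidParamSpace, 0 ≤ F p := fun p =>
    setIntegral_nonneg hSm fun x _ => by positivity
  -- positivity on the unit sphere
  have hFpos : ∀ p : RigidParamSpace, ‖p‖ = 1 → 0 < F p := by
    intro p hp1
    rcases lt_or_eq_of_le (hFnonneg p) with hlt | heq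
    · exact hlt
    exfalso
    have hzero : (fun x => ‖p.1 + p.2 (x - h)‖ ^ 2) =ᵐ[volume.restrict S] 0 := by
      rw [← integral_eq_zero_iff_of_nonneg (fun x => by positivity) (hint p)]
      exact heq.symm
    set sol : Set (EuclideanSpace ℝ (Fin 3)) := {x | p.2 (x - h) = -p.1} with hsol
    have hae : ∀ᵐ x ∂volume, x ∈ S → x ∈ sol := by
      rw [← ae_restrict_iff' hSm]
      filter_upwards [hzero] with x hx
      have hx' : ‖p.1 + p.2 (x - h)‖ ^ 2 = 0 := hx
      have : p.1 + p.2 (x - h) = 0 := by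
        rwa [pow_eq_zero_iff (by norm_num), norm_eq_zero] at hx'
      simpa [hsol, eq_neg_iff_add_eq_zero, add_comm] using this
    have hSsub : volume (S \ sol) = 0 :=
      measure_mono_null (fun x hx (hc : x ∈ S → x ∈ sol) => hx.2 (hc hx.1)) (ae_iff.1 hae)
    have hsolnull : volume sol = 0 := by
      by_cases hQ : p.2 = 0
      · have hY : p.1 ≠ 0 := by
          intro hY
          apply one_ne_zero (α := ℝ)
          rw [← hp1]
          have hp0 : p = 0 := Prod.ext_iff.2 ⟨hY, hQ⟩
          simp [hp0]
        have : sol = ∅ := by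
          ext x
          simp only [hsol, mem_setOf_eq, mem_empty_iff_false, iff_false, hQ]
          simp only [ContinuousLinearMap.zero_apply]
          exact fun hc => hY (by simpa using hc.symm)
        simp [this]
      · rcases Set.eq_empty_or_nonempty sol with hemp | ⟨x₀, hx₀⟩
        · simp [hemp]
        · have hker : volume (LinearMap.ker (p.2 : EuclideanSpace ℝ (Fin 3) →ₗ[ℝ] EuclideanSpace ℝ (Fin 3)) : Set (EuclideanSpace ℝ (Fin 3))) = 0 := by
            apply MeasureTheory.Measure.addHaar_submodule
            intro hk
            apply hQ; ext x
            have hx : p.2 x = 0 := LinearMap.mem_ker.1 (hk ▸ Submodule.mem_top)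
            simp [hx]
          have hsub : sol ⊆ (· + (-x₀)) ⁻¹'
              (LinearMap.ker (p.2 : EuclideanSpace ℝ (Fin 3) →ₗ[ℝ] EuclideanSpace ℝ (Fin 3)) : Set (EuclideanSpace ℝ (Fin 3))) := by
            intro x hx
            simp only [mem_preimage, SetLike.mem_coe, LinearMap.mem_ker]
            have : p.2 ((x - h) - (x₀ - h)) = 0 := by
              rw [map_sub, hx, hx₀]; abel
            simpa [sub_sub_sub_cancel_right, ← sub_eq_add_neg] using this
          refine measure_mono_null hsub ?_
          rw [measure_preimage_add_right]
          exact hker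
    have : volume S = 0 := by
      have hle := measure_union_le (μ := volume) (S ∩ sol) (S \ sol)
      rw [inter_union_diff] at hle
      have h1 : volume (S ∩ sol) = 0 := measure_mono_null inter_subset_right hsolnull
      rw [h1, hSsub, add_zero] at hle
      exact le_antisymm hle zero_le
    exact absurd this (ne_of_gt hpos)
  -- continuity of F
  have hcont : Continuous F := by
    rw [continuous_iff_continuousAt]
    intro p
    have key : ∀ q : RigidParamSpace, |F q - F p| ≤
        ((1 + R) ^ 2 * (‖q - p‖ * (‖q‖ + ‖p‖))) * (volume S).toReal := by
      intro q
      rw [hF]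
      rw [← integral_sub (hint q) (hint p)]
      rw [← Real.norm_eq_abs]
      refine norm_setIntegral_le_of_norm_le_const hvol (fun x hx => ?_)
      · set a := q.1 + q.2 (x - h) with ha
        set b := p.1 + p.2 (x - h) with hb
        have hab : ‖a - b‖ ≤ (1 + R) * ‖q - p‖ := by
          have h3 := hbd (q - p) x hx
          simp only [Prod.fst_sub, Prod.snd_sub, ContinuousLinearMap.sub_apply] at h3
          have h4 : a - b = q.1 - p.1 + (q.2 (x - h) - p.2 (x - h)) := by
            rw [ha, hb]; abel
          rw [h4]; exact h3
        have haq : ‖a‖ ≤ (1 + R) * ‖q‖ := hbd q x hx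
        have hbp : ‖b‖ ≤ (1 + R) * ‖p‖ := hbd p x hx
        have hfac : ‖a‖ ^ 2 - ‖b‖ ^ 2 = (‖a‖ - ‖b‖) * (‖a‖ + ‖b‖) := by ring
        rw [Real.norm_eq_abs, hfac, abs_mul]
        have h1 : |‖a‖ - ‖b‖| ≤ ‖a - b‖ := abs_norm_sub_norm_le a b
        have h2 : |‖a‖ + ‖b‖| ≤ (1 + R) * (‖q‖ + ‖p‖) := by
          rw [abs_of_nonneg (add_nonneg (norm_nonneg _) (norm_nonneg _))]
          calc ‖a‖ + ‖b‖ ≤ (1 + R) * ‖q‖ + (1 + R) * ‖p‖ := add_le_add haq hbp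
          _ = (1 + R) * (‖q‖ + ‖p‖) := by ring
        calc |‖a‖ - ‖b‖| * |‖a‖ + ‖b‖| ≤ ‖a - b‖ * ((1 + R) * (‖q‖ + ‖p‖)) :=
              mul_le_mul h1 h2 (abs_nonneg _) (norm_nonneg _)
        _ ≤ ((1 + R) * ‖q - p‖) * ((1 + R) * (‖q‖ + ‖p‖)) :=
              mul_le_mul_of_nonneg_right hab
                (mul_nonneg hR0 (add_nonneg (norm_nonneg _) (norm_nonneg _)))
        _ = (1 + R) ^ 2 * (‖q - p‖ * (‖q‖ + ‖p‖)) := by ring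
    rw [ContinuousAt, ← tendsto_sub_nhds_zero_iff]
    have hgc : Continuous (fun q : RigidParamSpace =>
        ((1 + R) ^ 2 * (‖q - p‖ * (‖q‖ + ‖p‖))) * (volume S).toReal) :=
      (continuous_const.mul (((continuous_id.sub continuous_const).norm).mul
        (continuous_norm.add continuous_const))).mul continuous_const
    have hg : Tendsto (fun q : RigidParamSpace =>
        ((1 + R) ^ 2 * (‖q - p‖ * (‖q‖ + ‖p‖))) * (volume S).toReal) (𝓝 p) (𝓝 0) := by
      have := hgc.tendsto p
      simpa using this
    exact squeeze_zero_norm (fun q => by rw [Real.norm_eq_abs]; exact key q) hg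
  -- homogeneity of F
  have hscale : ∀ (s : ℝ) (p : RigidParamSpace), F (s • p) = s ^ 2 * F p := by
    intro s p
    rw [hF]
    simp only [Prod.smul_fst, Prod.smul_snd, ContinuousLinearMap.smul_apply, ← smul_add,
      norm_smul, mul_pow, Real.norm_eq_abs, sq_abs]
    simp_rw [← smul_eq_mul, integral_smul]
  -- minimum on the sphere
  obtain ⟨p₀, hp₀K, hmin⟩ := (isCompact_sphere (0 : RigidParamSpace) 1).exists_isMinOn
    (NormedSpace.sphere_nonempty.2 zero_le_one) hcont.continuousOn
  have hp₀1 : ‖p₀‖ = 1 := by simpa using mem_sphere_zero_iff_norm.1 hp₀K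
  have hc₀pos : 0 < F p₀ := hFpos p₀ hp₀1
  refine ⟨F p₀ / 2, by positivity, ?_⟩
  intro Y Q _
  have hFYQ : F (Y, Q) = ∫ x in S, ‖Y + Q (x - h)‖ ^ 2 := rfl
  rw [← hFYQ]
  rcases eq_or_ne ((Y, Q) : RigidParamSpace) 0 with hp0 | hp0
  · have hY : Y = 0 := congrArg Prod.fst hp0
    have hQ : Q = 0 := congrArg Prod.snd hp0
    rw [hY, hQ]
    simp only [norm_zero, ne_eq, OfNat.ofNat_ne_zero, not_false_eq_true, zero_pow, add_zero,
      mul_zero]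
    simpa using hFnonneg ((0, 0) : RigidParamSpace)
  · have ht : 0 < ‖((Y, Q) : RigidParamSpace)‖ := norm_pos_iff.2 hp0
    have hu1 : ‖(‖((Y, Q) : RigidParamSpace)‖⁻¹ • ((Y, Q) : RigidParamSpace))‖ = 1 := by
      exact norm_smul_inv_norm hp0
    have hmin' : F p₀ ≤ F (‖((Y, Q) : RigidParamSpace)‖⁻¹ • ((Y, Q) : RigidParamSpace)) :=
      hmin (mem_sphere_zero_iff_norm.2 hu1)
    rw [hscale] at hmin'
    have hFp : F p₀ * ‖((Y, Q) : RigidParamSpace)‖ ^ 2 ≤ F (Y, Q) := by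
      have h5 := mul_le_mul_of_nonneg_right hmin' (sq_nonneg ‖((Y, Q) : RigidParamSpace)‖)
      calc F p₀ * ‖((Y, Q) : RigidParamSpace)‖ ^ 2
          ≤ ‖((Y, Q) : RigidParamSpace)‖⁻¹ ^ 2 * F (Y, Q) * ‖((Y, Q) : RigidParamSpace)‖ ^ 2 := h5
      _ = F (Y, Q) := by field_simp
    have hYt : ‖Y‖ ≤ ‖((Y, Q) : RigidParamSpace)‖ := norm_fst_le ((Y, Q) : RigidParamSpace)
    have hQt : ‖Q‖ ≤ ‖((Y, Q) : RigidParamSpace)‖ := norm_snd_le ((Y, Q) : RigidParamSpace)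
    have hsum : ‖Y‖ ^ 2 + ‖Q‖ ^ 2 ≤ 2 * ‖((Y, Q) : RigidParamSpace)‖ ^ 2 := by
      nlinarith [norm_nonneg Y, norm_nonneg Q]
    calc F p₀ / 2 * (‖Y‖ ^ 2 + ‖Q‖ ^ 2) ≤ F p₀ / 2 * (2 * ‖((Y, Q) : RigidParamSpace)‖ ^ 2) :=
          mul_le_mul_of_nonneg_left hsum (by positivity)
    _ = F p₀ * ‖((Y, Q) : RigidParamSpace)‖ ^ 2 := by ring
    _ ≤ F (Y, Q) := hFp
end
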